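/- (Uniform linear representation, first part) Let Σ₁, Σ₂ ∈ ℝ^{p×p} be symmetric with Λ(k; Σ₂) > 0, Γ₁, Γ₂ ∈ ℝ^p, and let k ≥ 1 be an integer such that RIP(k, Σ₁ − Σ₂) < Λ(k; Σ₂). Then for all models M ∈ 𝓜(k), ‖β_M(Σ₁, Γ₁) − β_M(Σ₂, Γ₂) − [Σ₂(M)]^{-1}(Γ₁(M) − Σ₁(M) β_M(Σ₂, Γ₂))‖₂ ≤ (RIP(k, Σ₁ − Σ₂)/Λ(k; Σ₂)) · ‖β_M(Σ₁, Γ₁) − β_M(Σ₂, Γ₂)‖₂. -/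

import Mathlib

open scoped BigOperators
open MeasureTheory ProbabilityTheory Real Matrix

noncomputable section

/-- The Euclidean (`ℓ₂`) norm of a finitely indexed real vector. -/
def norm2 {ι : Type*} [Fintype ι] (v : ι → ℝ) : ℝ := Real.sqrt (∑ i, (v i) ^ 2)

/-- The `ℓ₁` norm of a finitely indexed real vector. -/
def norm1 {ι : Type*} [Fintype ι] (v : ι → ℝ) : ℝ := ∑ i, |v i|

/-- The `ℓ₂ → ℓ₂` operator norm of a square real matrix. -/
def opNorm {ι : Type*} [Fintype ι] (A : Matrix ι ι ℝ) : ℝ :=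
  sSup {r | ∃ x : ι → ℝ, norm2 x ≤ 1 ∧ r = norm2 (A.mulVec x)}

/-- The collection of models: nonempty subsets of `{1, …, p}` of cardinality at most `k`. -/
def Models (p k : ℕ) : Set (Finset (Fin p)) := {M | 1 ≤ M.card ∧ M.card ≤ k}

/-- The subvector of `v` with indices in the model `M`. -/
def subv {p : ℕ} (v : Fin p → ℝ) (M : Finset (Fin p)) : {x // x ∈ M} → ℝ := fun i => v i.1

/-- The submatrix of `A` with row and column indices in the model `M`. -/
def subm {p : ℕ} (A : Matrix (Fin p) (Fin p) ℝ) (M : Finset (Fin p)) :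
    Matrix {x // x ∈ M} {x // x ∈ M} ℝ := fun i j => A i.1 j.1

/-- `RIP(k, A)`: the maximal `k`-sparse operator norm `sup_{M ∈ 𝓜(k)} ‖A(M)‖_op`. -/
def RIP {p : ℕ} (k : ℕ) (A : Matrix (Fin p) (Fin p) ℝ) : ℝ :=
  ⨆ M : Models p k, opNorm (subm A M.1)

/-- `𝒟(k, v) = sup_{M ∈ 𝓜(k)} ‖v(M)‖₂`. -/
def Dnorm {p : ℕ} (k : ℕ) (v : Fin p → ℝ) : ℝ :=
  ⨆ M : Models p k, norm2 (subv v M.1)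

/-- `θ` has at most `k` nonzero coordinates. -/
def sparse {p : ℕ} (k : ℕ) (θ : Fin p → ℝ) : Prop := Set.ncard {j | θ j ≠ 0} ≤ k

/-- The minimal `k`-sparse eigenvalue
`Λ(k; A) = inf{θᵀAθ/‖θ‖₂² : θ ≠ 0, θ k-sparse}`. -/
def Lam {p : ℕ} (k : ℕ) (A : Matrix (Fin p) (Fin p) ℝ) : ℝ :=
  sInf {r | ∃ θ : Fin p → ℝ, θ ≠ 0 ∧ sparse k θ ∧ r = θ ⬝ᵥ A.mulVec θ / norm2 θ ^ 2}

/-- The linear regression map `β_M(Σ, Γ) = (Σ(M))⁻¹ Γ(M)`. -/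
def betaM {p : ℕ} (M : Finset (Fin p)) (S : Matrix (Fin p) (Fin p) ℝ) (G : Fin p → ℝ) :
    {x // x ∈ M} → ℝ := (subm S M)⁻¹.mulVec (subv G M)

/-- `S_{2,k}(Σ, Γ) = sup_{M ∈ 𝓜(k)} ‖β_M(Σ, Γ)‖₂`. -/
def S2k {p : ℕ} (k : ℕ) (S : Matrix (Fin p) (Fin p) ℝ) (G : Fin p → ℝ) : ℝ :=
  ⨆ M : Models p k, norm2 (betaM M.1 S G)

/-- `S_{1,k}(Σ, Γ) = sup_{M ∈ 𝓜(k)} ‖β_M(Σ, Γ)‖₁`. -/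
def S1k {p : ℕ} (k : ℕ) (S : Matrix (Fin p) (Fin p) ℝ) (G : Fin p → ℝ) : ℝ :=
  ⨆ M : Models p k, norm1 (betaM M.1 S G)

/-- The `k`-sparse Euclidean unit ball `Θ_k ⊆ ℝ^p`. -/
def Theta (p k : ℕ) : Set (Fin p → ℝ) := {θ | sparse k θ ∧ norm2 θ ≤ 1}

/-- The elementwise maximum norm `|||A|||_∞` of a matrix. -/
def normInfMat {p : ℕ} (A : Matrix (Fin p) (Fin p) ℝ) : ℝ :=
  ⨆ q : Fin p × Fin p, |A q.1 q.2|

/-- The supremum norm `‖v‖_∞` of a vector. -/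
def normInfVec {p : ℕ} (v : Fin p → ℝ) : ℝ := ⨆ j, |v j|

namespace Aux

variable {ι : Type*} [Fintype ι]

lemma norm2_nonneg (v : ι → ℝ) : 0 ≤ norm2 v := Real.sqrt_nonneg _

lemma norm2_sq (v : ι → ℝ) : norm2 v ^ 2 = ∑ i, (v i) ^ 2 :=
  Real.sq_sqrt (Finset.sum_nonneg fun i _ => sq_nonneg _)

lemma norm2_zero : norm2 (0 : ι → ℝ) = 0 := by simp [norm2]

lemma norm2_pos {v : ι → ℝ} (hv : v ≠ 0) : 0 < norm2 v := by
  obtain ⟨i, hi⟩ := Function.ne_iff.mp hv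
  have h1 : (0:ℝ) < v i ^ 2 := by
    have := abs_pos.mpr hi
    nlinarith [sq_abs (v i)]
  have h2 : v i ^ 2 ≤ ∑ j, (v j) ^ 2 :=
    Finset.single_le_sum (fun j _ => sq_nonneg (v j)) (Finset.mem_univ i)
  exact Real.sqrt_pos.mpr (lt_of_lt_of_le h1 h2)

lemma norm2_neg (v : ι → ℝ) : norm2 (-v) = norm2 v := by simp [norm2]

lemma norm2_smul (c : ℝ) (v : ι → ℝ) : norm2 (c • v) = |c| * norm2 v := by
  unfold norm2
  have : ∑ i, ((c • v) i) ^ 2 = c ^ 2 * ∑ i, (v i) ^ 2 := by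
    rw [Finset.mul_sum]; congr 1; ext i; simp [mul_pow]
  rw [this, Real.sqrt_mul (sq_nonneg c), Real.sqrt_sq_eq_abs]

lemma abs_dot_le (v w : ι → ℝ) : |v ⬝ᵥ w| ≤ norm2 v * norm2 w := by
  have h := Finset.sum_mul_sq_le_sq_mul_sq Finset.univ v w
  have h2 : |v ⬝ᵥ w| = Real.sqrt ((v ⬝ᵥ w) ^ 2) := (Real.sqrt_sq_eq_abs _).symm
  rw [h2]
  calc Real.sqrt ((v ⬝ᵥ w) ^ 2) ≤ Real.sqrt ((∑ i, v i ^ 2) * ∑ i, w i ^ 2) :=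
        Real.sqrt_le_sqrt h
    _ = norm2 v * norm2 w := by
        rw [Real.sqrt_mul (Finset.sum_nonneg fun i _ => sq_nonneg _)]; rfl

lemma dot_le (v w : ι → ℝ) : v ⬝ᵥ w ≤ norm2 v * norm2 w :=
  le_trans (le_abs_self _) (abs_dot_le v w)

lemma mulVec_frob (A : Matrix ι ι ℝ) (x : ι → ℝ) :
    norm2 (A.mulVec x) ≤ Real.sqrt (∑ i, ∑ j, A i j ^ 2) * norm2 x := by
  have key : ∑ i, (A.mulVec x i) ^ 2 ≤ (∑ i, ∑ j, A i j ^ 2) * ∑ j, x j ^ 2 := by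
    rw [Finset.sum_mul]
    apply Finset.sum_le_sum
    intro i _
    exact Finset.sum_mul_sq_le_sq_mul_sq Finset.univ (fun j => A i j) x
  calc norm2 (A.mulVec x) ≤ Real.sqrt ((∑ i, ∑ j, A i j ^ 2) * ∑ j, x j ^ 2) :=
        Real.sqrt_le_sqrt key
    _ = Real.sqrt (∑ i, ∑ j, A i j ^ 2) * norm2 x := by
        exact Real.sqrt_mul (Finset.sum_nonneg fun i _ => Finset.sum_nonneg fun j _ => sq_nonneg _) _

lemma opNorm_set_bddAbove (A : Matrix ι ι ℝ) :
    BddAbove {r | ∃ x : ι → ℝ, norm2 x ≤ 1 ∧ r = norm2 (A.mulVec x)} := by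
  refine ⟨Real.sqrt (∑ i, ∑ j, A i j ^ 2), ?_⟩
  rintro r ⟨x, hx, rfl⟩
  calc norm2 (A.mulVec x) ≤ Real.sqrt (∑ i, ∑ j, A i j ^ 2) * norm2 x := mulVec_frob A x
    _ ≤ Real.sqrt (∑ i, ∑ j, A i j ^ 2) * 1 :=
        mul_le_mul_of_nonneg_left hx (Real.sqrt_nonneg _)
    _ = _ := mul_one _

lemma opNorm_nonneg (A : Matrix ι ι ℝ) : 0 ≤ opNorm A := by
  apply le_csSup (opNorm_set_bddAbove A)
  exact ⟨0, by simp [norm2_zero], by simp [Matrix.mulVec_zero, norm2_zero]⟩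

lemma norm2_mulVec_le (A : Matrix ι ι ℝ) (v : ι → ℝ) :
    norm2 (A.mulVec v) ≤ opNorm A * norm2 v := by
  by_cases hv : v = 0
  · simp [hv, Matrix.mulVec_zero, norm2_zero]
  · have hn : 0 < norm2 v := norm2_pos hv
    set x : ι → ℝ := (norm2 v)⁻¹ • v with hxdef
    have hx1 : norm2 x = 1 := by
      rw [hxdef, norm2_smul, abs_of_pos (inv_pos.mpr hn), inv_mul_cancel₀ hn.ne']
    have hmem : norm2 (A.mulVec x) ∈
        {r | ∃ y : ι → ℝ, norm2 y ≤ 1 ∧ r = norm2 (A.mulVec y)} := ⟨x, hx1.le, rfl⟩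
    have hle : norm2 (A.mulVec x) ≤ opNorm A := le_csSup (opNorm_set_bddAbove A) hmem
    have hAx : A.mulVec x = (norm2 v)⁻¹ • A.mulVec v := by
      rw [hxdef, A.mulVec_smul]
    rw [hAx, norm2_smul, abs_of_pos (inv_pos.mpr hn)] at hle
    calc norm2 (A.mulVec v) = norm2 v * ((norm2 v)⁻¹ * norm2 (A.mulVec v)) := by
          field_simp
      _ ≤ norm2 v * opNorm A := mul_le_mul_of_nonneg_left hle hn.le
      _ = opNorm A * norm2 v := mul_comm _ _

lemma abs_quad_le (A : Matrix ι ι ℝ) (y : ι → ℝ) :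
    |y ⬝ᵥ A.mulVec y| ≤ opNorm A * norm2 y ^ 2 := by
  calc |y ⬝ᵥ A.mulVec y| ≤ norm2 y * norm2 (A.mulVec y) := abs_dot_le _ _
    _ ≤ norm2 y * (opNorm A * norm2 y) :=
        mul_le_mul_of_nonneg_left (norm2_mulVec_le A y) (norm2_nonneg y)
    _ = opNorm A * norm2 y ^ 2 := by ring

lemma inv_mulVec_norm_le {c : ℝ} (hc : 0 < c) (A : Matrix ι ι ℝ) [DecidableEq ι]
    (hquad : ∀ y : ι → ℝ, c * norm2 y ^ 2 ≤ y ⬝ᵥ A.mulVec y)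
    (hunit : IsUnit A.det) (w : ι → ℝ) :
    norm2 (A⁻¹.mulVec w) ≤ norm2 w / c := by
  set y := A⁻¹.mulVec w with hy
  have hAy : A.mulVec y = w := by
    rw [hy, Matrix.mulVec_mulVec, Matrix.mul_nonsing_inv A hunit, Matrix.one_mulVec]
  have h1 : c * norm2 y ^ 2 ≤ y ⬝ᵥ w := by rw [← hAy]; exact hquad y
  have h2 : y ⬝ᵥ w ≤ norm2 y * norm2 w := dot_le y w
  by_cases hy0 : y = 0
  · rw [hy0, norm2_zero]
    exact div_nonneg (norm2_nonneg w) hc.le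
  · have hny : 0 < norm2 y := norm2_pos hy0
    have : c * norm2 y ≤ norm2 w := by
      have := le_trans h1 h2
      nlinarith [hny]
    rw [le_div_iff₀ hc]
    nlinarith

end Aux

namespace Aux2

open Aux

variable {p k : ℕ}

/-- Extend a vector on a model `M` by zero to all of `Fin p`. -/
def extv (M : Finset (Fin p)) (y : {x // x ∈ M} → ℝ) : Fin p → ℝ :=
  fun j => if h : j ∈ M then y ⟨j, h⟩ else 0

lemma sum_eq_sub {M : Finset (Fin p)} (F : Fin p → ℝ) (h0 : ∀ j ∉ M, F j = 0) :
    ∑ j, F j = ∑ j : {x // x ∈ M}, F j.1 := by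
  rw [Finset.sum_coe_sort M F]
  exact (Finset.sum_subset (Finset.subset_univ M) (fun x _ hx => h0 x hx)).symm

lemma extv_nm {M : Finset (Fin p)} (y : {x // x ∈ M} → ℝ) {j : Fin p} (hj : j ∉ M) :
    extv M y j = 0 := dif_neg hj

lemma extv_apply {M : Finset (Fin p)} (y : {x // x ∈ M} → ℝ) (j : {x // x ∈ M}) :
    extv M y j.1 = y j := by simp [extv, j.2]

lemma norm2_extv {M : Finset (Fin p)} (y : {x // x ∈ M} → ℝ) :
    norm2 (extv M y) = norm2 y := by
  unfold norm2
  congr 1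
  rw [sum_eq_sub (M := M) (fun j => extv M y j ^ 2) (fun j hj => by rw [extv_nm y hj]; ring)]
  exact Finset.sum_congr rfl fun j _ => by rw [extv_apply]

lemma extv_ne_zero {M : Finset (Fin p)} {y : {x // x ∈ M} → ℝ} (hy : y ≠ 0) :
    extv M y ≠ 0 := by
  obtain ⟨i, hi⟩ := Function.ne_iff.mp hy
  refine Function.ne_iff.mpr ⟨i.1, ?_⟩
  rw [extv_apply]
  simpa using hi

lemma sparse_extv {M : Finset (Fin p)} (hM : M.card ≤ k) (y : {x // x ∈ M} → ℝ) :
    sparse k (extv M y) := by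
  unfold sparse
  have hsub : {j | extv M y j ≠ 0} ⊆ (↑M : Set (Fin p)) := by
    intro j hj
    by_contra hjM
    exact hj (extv_nm y (by simpa using hjM))
  calc Set.ncard {j | extv M y j ≠ 0} ≤ (↑M : Set (Fin p)).ncard :=
        Set.ncard_le_ncard hsub (M.finite_toSet)
    _ = M.card := Set.ncard_coe_finset M
    _ ≤ k := hM

lemma quad_extv {M : Finset (Fin p)} (A : Matrix (Fin p) (Fin p) ℝ)
    (y : {x // x ∈ M} → ℝ) :
    extv M y ⬝ᵥ A.mulVec (extv M y) = y ⬝ᵥ (subm A M).mulVec y := by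
  unfold dotProduct
  rw [sum_eq_sub (M := M) (fun i => extv M y i * A.mulVec (extv M y) i)
    (fun i hi => by rw [extv_nm y hi]; ring)]
  apply Finset.sum_congr rfl
  intro i _
  rw [extv_apply]
  congr 1
  show A.mulVec (extv M y) i.1 = (subm A M).mulVec y i
  unfold Matrix.mulVec dotProduct
  rw [sum_eq_sub (M := M) (fun j => A i.1 j * extv M y j) (fun j hj => by rw [extv_nm y hj]; ring)]
  apply Finset.sum_congr rfl
  intro j _
  rw [extv_apply]
  rfl

lemma Lam_le_quad {A : Matrix (Fin p) (Fin p) ℝ} (hA : 0 < Lam k A)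
    {θ : Fin p → ℝ} (hθ : θ ≠ 0) (hs : sparse k θ) :
    Lam k A * norm2 θ ^ 2 ≤ θ ⬝ᵥ A.mulVec θ := by
  set S := {r | ∃ θ : Fin p → ℝ, θ ≠ 0 ∧ sparse k θ ∧ r = θ ⬝ᵥ A.mulVec θ / norm2 θ ^ 2}
  have hbdd : BddBelow S := by
    by_contra hb
    rw [show Lam k A = sInf S from rfl, Real.sInf_of_not_bddBelow hb] at hA
    exact lt_irrefl 0 hA
  have hmem : θ ⬝ᵥ A.mulVec θ / norm2 θ ^ 2 ∈ S := ⟨θ, hθ, hs, rfl⟩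
  have hle : Lam k A ≤ θ ⬝ᵥ A.mulVec θ / norm2 θ ^ 2 := csInf_le hbdd hmem
  have hn : 0 < norm2 θ ^ 2 := pow_pos (norm2_pos hθ) 2
  calc Lam k A * norm2 θ ^ 2 ≤ (θ ⬝ᵥ A.mulVec θ / norm2 θ ^ 2) * norm2 θ ^ 2 :=
        mul_le_mul_of_nonneg_right hle hn.le
    _ = θ ⬝ᵥ A.mulVec θ := div_mul_cancel₀ _ hn.ne'

lemma quad_sub_ge {A : Matrix (Fin p) (Fin p) ℝ} (hA : 0 < Lam k A)
    {M : Finset (Fin p)} (hM : M.card ≤ k) (y : {x // x ∈ M} → ℝ) :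
    Lam k A * norm2 y ^ 2 ≤ y ⬝ᵥ (subm A M).mulVec y := by
  by_cases hy : y = 0
  · simp [hy, norm2_zero, dotProduct]
  · rw [← quad_extv A y, ← norm2_extv y]
    exact Lam_le_quad hA (extv_ne_zero hy) (sparse_extv hM y)

lemma opNorm_le_RIP (A : Matrix (Fin p) (Fin p) ℝ) {M : Finset (Fin p)}
    (hM : M ∈ Models p k) : opNorm (subm A M) ≤ RIP k A := by
  have hbdd : BddAbove (Set.range fun N : Models p k => opNorm (subm A N.1)) :=
    Set.Finite.bddAbove (Set.finite_range _)
  exact le_ciSup hbdd (⟨M, hM⟩ : Models p k)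

lemma subm_isHermitian {A : Matrix (Fin p) (Fin p) ℝ} (hA : A.IsSymm)
    (M : Finset (Fin p)) : (subm A M).IsHermitian := by
  ext i j
  simpa [subm] using congrFun (congrFun hA.eq i.1) j.1

end Aux2

/-- Uniform linear representation, first part: if
`RIP(k, Σ₁ − Σ₂) < Λ(k; Σ₂)` then for all `M ∈ 𝓜(k)`,
`‖β_M(Σ₁,Γ₁) − β_M(Σ₂,Γ₂) − (Σ₂(M))⁻¹(Γ₁(M) − Σ₁(M)β_M(Σ₂,Γ₂))‖₂
  ≤ (RIP(k, Σ₁ − Σ₂)/Λ(k; Σ₂)) ‖β_M(Σ₁,Γ₁) − β_M(Σ₂,Γ₂)‖₂`. -/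
theorem stmt6 {p : ℕ} (k : ℕ) (hk : 1 ≤ k)
    (Sig1 Sig2 : Matrix (Fin p) (Fin p) ℝ) (hS1 : Sig1.IsSymm) (hS2 : Sig2.IsSymm)
    (G1 G2 : Fin p → ℝ)
    (hLam : 0 < Lam k Sig2)
    (hRIP : RIP k (Sig1 - Sig2) < Lam k Sig2) :
    ∀ M ∈ Models p k,
      norm2 (betaM M Sig1 G1 - betaM M Sig2 G2
          - (subm Sig2 M)⁻¹.mulVec
              (subv G1 M - (subm Sig1 M).mulVec (betaM M Sig2 G2))) ≤
        (RIP k (Sig1 - Sig2) / Lam k Sig2) *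
          norm2 (betaM M Sig1 G1 - betaM M Sig2 G2) := by
  classical
  intro M hM
  obtain ⟨hM1, hMk⟩ := hM
  set A1 := subm Sig1 M with hA1def
  set A2 := subm Sig2 M with hA2def
  set D := subm (Sig1 - Sig2) M with hDdef
  set Λ := Lam k Sig2 with hΛdef
  set R := RIP k (Sig1 - Sig2) with hRdef
  have hDle : opNorm D ≤ R := Aux2.opNorm_le_RIP (Sig1 - Sig2) ⟨hM1, hMk⟩
  have hquad2 : ∀ y : {x // x ∈ M} → ℝ, Λ * norm2 y ^ 2 ≤ y ⬝ᵥ A2.mulVec y :=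
    fun y => Aux2.quad_sub_ge hLam hMk y
  have hA2pd : A2.PosDef := by
    refine Matrix.PosDef.of_dotProduct_mulVec_pos (Aux2.subm_isHermitian hS2 M) fun y hy => ?_
    have h1 : 0 < Λ * norm2 y ^ 2 :=
      mul_pos hLam (pow_pos (Aux.norm2_pos hy) 2)
    have := lt_of_lt_of_le h1 (hquad2 y)
    simpa using this
  have hA2unit : IsUnit A2.det := isUnit_iff_ne_zero.mpr hA2pd.det_pos.ne'
  have hsplit : A1 = A2 + D := by
    ext i j
    simp [hA1def, hA2def, hDdef, subm, Matrix.sub_apply]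
  have hquadD : ∀ y : {x // x ∈ M} → ℝ, -(R * norm2 y ^ 2) ≤ y ⬝ᵥ D.mulVec y := by
    intro y
    have h1 := Aux.abs_quad_le D y
    have h2 : opNorm D * norm2 y ^ 2 ≤ R * norm2 y ^ 2 :=
      mul_le_mul_of_nonneg_right hDle (sq_nonneg _)
    have h3 := neg_abs_le (y ⬝ᵥ D.mulVec y)
    linarith
  have hquad1 : ∀ y : {x // x ∈ M} → ℝ, (Λ - R) * norm2 y ^ 2 ≤ y ⬝ᵥ A1.mulVec y := by
    intro y
    rw [hsplit, Matrix.add_mulVec, dotProduct_add]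
    have := hquad2 y
    have := hquadD y
    nlinarith
  have hΛR : 0 < Λ - R := sub_pos.mpr hRIP
  have hA1pd : A1.PosDef := by
    refine Matrix.PosDef.of_dotProduct_mulVec_pos (Aux2.subm_isHermitian hS1 M) fun y hy => ?_
    have h1 : 0 < (Λ - R) * norm2 y ^ 2 :=
      mul_pos hΛR (pow_pos (Aux.norm2_pos hy) 2)
    have := lt_of_lt_of_le h1 (hquad1 y)
    simpa using this
  have hA1unit : IsUnit A1.det := isUnit_iff_ne_zero.mpr hA1pd.det_pos.ne'
  set b1 := betaM M Sig1 G1 with hb1def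
  set b2 := betaM M Sig2 G2 with hb2def
  have hG1 : A1.mulVec b1 = subv G1 M := by
    rw [hb1def, betaM, Matrix.mulVec_mulVec, ← hA1def,
      Matrix.mul_nonsing_inv _ hA1unit, Matrix.one_mulVec]
  have hid : b1 - b2 - A2⁻¹.mulVec (subv G1 M - A1.mulVec b2)
      = -(A2⁻¹.mulVec (D.mulVec (b1 - b2))) := by
    have e1 : subv G1 M - A1.mulVec b2 = A1.mulVec (b1 - b2) := by
      rw [← hG1, ← Matrix.mulVec_sub]
    have e2 : b1 - b2 = A2⁻¹.mulVec (A2.mulVec (b1 - b2)) := by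
      rw [Matrix.mulVec_mulVec, Matrix.nonsing_inv_mul _ hA2unit, Matrix.one_mulVec]
    calc b1 - b2 - A2⁻¹.mulVec (subv G1 M - A1.mulVec b2)
        = A2⁻¹.mulVec (A2.mulVec (b1 - b2)) - A2⁻¹.mulVec (A1.mulVec (b1 - b2)) := by
          rw [e1, ← e2]
      _ = A2⁻¹.mulVec (A2.mulVec (b1 - b2) - A1.mulVec (b1 - b2)) := by
          rw [Matrix.mulVec_sub A2⁻¹]
      _ = A2⁻¹.mulVec ((A2 - A1).mulVec (b1 - b2)) := by
          rw [Matrix.sub_mulVec]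
      _ = A2⁻¹.mulVec ((-D).mulVec (b1 - b2)) := by
          rw [show A2 - A1 = -D by rw [hsplit]; abel]
      _ = -(A2⁻¹.mulVec (D.mulVec (b1 - b2))) := by
          rw [Matrix.neg_mulVec, Matrix.mulVec_neg]
  rw [hid, Aux.norm2_neg]
  calc norm2 (A2⁻¹.mulVec (D.mulVec (b1 - b2)))
      ≤ norm2 (D.mulVec (b1 - b2)) / Λ :=
        Aux.inv_mulVec_norm_le hLam A2 hquad2 hA2unit _
    _ ≤ (R * norm2 (b1 - b2)) / Λ := by
        apply div_le_div_of_nonneg_right ?_ hLam.le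
        calc norm2 (D.mulVec (b1 - b2)) ≤ opNorm D * norm2 (b1 - b2) :=
              Aux.norm2_mulVec_le D _
          _ ≤ R * norm2 (b1 - b2) :=
              mul_le_mul_of_nonneg_right hDle (Aux.norm2_nonneg _)
    _ = (R / Λ) * norm2 (b1 - b2) := by ring
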